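/- Let H : ℝ² → ℝ be smooth with H(x,y) = c₀ + x·y in a neighborhood of the origin. For c > c₀ close to c₀, consider the curve segment L_c ∩ U' = {(x, (c−c₀)/x) : (c−c₀)/δ < x < δ} inside the square (−δ,δ)². Then the integral of |∇H|^{−1} with respect to arc length over this segment tends to +∞ as c → c₀⁺. Specifically, ∫_{(c−c₀)/δ}^{δ} (x² + (c−c₀)²/x²)^{−1/2} √(1 + (c−c₀)²/x⁴) dx → +∞ as c → c₀⁺. -/

import Mathlib

open Real MeasureTheory intervalIntegral Filter Set

lemma integrand_eq_inv (ε : ℝ) {x : ℝ} (hx : 0 < x) :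
    (Real.sqrt (x ^ 2 + ε ^ 2 / x ^ 2))⁻¹ * Real.sqrt (1 + ε ^ 2 / x ^ 4) = x⁻¹ := by
  have h1 : (0:ℝ) ≤ 1 + ε ^ 2 / x ^ 4 := by positivity
  have hs : 0 < Real.sqrt (1 + ε ^ 2 / x ^ 4) := by
    apply Real.sqrt_pos.2; positivity
  have key : x ^ 2 + ε ^ 2 / x ^ 2 = x ^ 2 * (1 + ε ^ 2 / x ^ 4) := by
    field_simp
  rw [key, Real.sqrt_mul (by positivity), Real.sqrt_sq hx.le]
  rw [mul_inv]
  field_simp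

/-- for the saddle `H(x,y) = c₀ + xy`, the integral of `|∇H|⁻¹` with
respect to arc length along the level-set branch `{y = (c-c₀)/x, (c-c₀)/δ < x < δ}`
tends to `+∞` as `c → c₀⁺`:
`∫_{(c-c₀)/δ}^{δ} (x² + (c-c₀)²/x²)^{-1/2} √(1 + (c-c₀)²/x⁴) dx → +∞`. -/
theorem saddle_action_derivative_diverges (c₀ δ : ℝ) (hδ : 0 < δ) :
    Tendsto
      (fun c : ℝ => ∫ x in ((c - c₀) / δ)..δ,
        (Real.sqrt (x ^ 2 + (c - c₀) ^ 2 / x ^ 2))⁻¹ * Real.sqrt (1 + (c - c₀) ^ 2 / x ^ 4))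
      (nhdsWithin c₀ (Set.Ioi c₀)) atTop := by
  have hsub : Tendsto (fun c : ℝ => c - c₀) (nhdsWithin c₀ (Set.Ioi c₀))
      (nhdsWithin 0 (Set.Ioi 0)) := by
    apply tendsto_nhdsWithin_of_tendsto_nhds_of_eventually_within
    · have : Tendsto (fun c : ℝ => c - c₀) (nhds c₀) (nhds 0) := by
        simpa using ((tendsto_id (α := ℝ)).sub_const c₀ : Tendsto _ (nhds c₀) _)
      exact this.mono_left nhdsWithin_le_nhds
    · filter_upwards [self_mem_nhdsWithin] with c hc
      simpa [sub_pos] using hc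
  have hloglim : Tendsto (fun c : ℝ => Real.log δ - Real.log ((c - c₀) / δ))
      (nhdsWithin c₀ (Set.Ioi c₀)) atTop := by
    apply tendsto_atTop_add_const_left _ _ 
    have h1 : Tendsto (fun c : ℝ => (c - c₀) / δ) (nhdsWithin c₀ (Set.Ioi c₀))
        (nhdsWithin 0 (Set.Ioi 0)) := by
      apply tendsto_nhdsWithin_of_tendsto_nhds_of_eventually_within
      · simpa using (hsub.mono_right nhdsWithin_le_nhds).div_const δ
      · filter_upwards [self_mem_nhdsWithin] with c hc
        have : 0 < c - c₀ := by simpa [sub_pos] using hc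
        exact div_pos this hδ
    have := Real.tendsto_log_nhdsGT_zero.comp h1
    exact tendsto_neg_atTop_iff.mpr this
  apply hloglim.congr'
  filter_upwards [self_mem_nhdsWithin] with c hc
  have hε : 0 < c - c₀ := by simpa [sub_pos] using hc
  have ha : 0 < (c - c₀) / δ := div_pos hε hδ
  have hcongr : (∫ x in ((c - c₀) / δ)..δ,
      (Real.sqrt (x ^ 2 + (c - c₀) ^ 2 / x ^ 2))⁻¹ * Real.sqrt (1 + (c - c₀) ^ 2 / x ^ 4))
      = ∫ x in ((c - c₀) / δ)..δ, x⁻¹ := by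
    rcases le_or_gt ((c - c₀) / δ) δ with h | h
    · apply intervalIntegral.integral_congr
      intro x hx
      rw [Set.uIcc_of_le h] at hx
      exact integrand_eq_inv _ (lt_of_lt_of_le ha hx.1)
    · apply intervalIntegral.integral_congr
      intro x hx
      rw [Set.uIcc_of_ge h.le] at hx
      exact integrand_eq_inv _ (lt_of_lt_of_le hδ hx.1)
  rw [hcongr, integral_inv]
  · rw [Real.log_div (ne_of_gt hδ) (ne_of_gt ha)]
  · intro h0
    rcases Set.mem_uIcc.1 h0 with ⟨h, _⟩ | ⟨h, _⟩
    · exact absurd h (not_le.2 ha)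
    · exact absurd h (not_le.2 hδ)
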